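/- Let K ≥ 2, let a, w ∈ ℝ^K (Euclidean space) with a ≠ 0, and let l ∈ ℝ with l² ≤ ‖a‖². Let P_E denote the orthogonal projection onto the hyperplane E = {x ∈ ℝ^K : ⟨a, x⟩ = 0} (the orthogonal complement of the span of a). Then |l·⟨a, w⟩/‖a‖²| + √(1 − l²/‖a‖²)·‖P_E w‖ is the maximum (attained supremum) of |⟨x, w⟩| over the set {x ∈ ℝ^K : ‖x‖ = 1 and ⟨a, x⟩ = l}. (Paper: Lemma lemma:maxScalarProduct, part b).) -/

import Mathlib

/-- Lemma lemma:maxScalarProduct, part b). -/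
theorem max_abs_scalar_product_on_sphere_slice {K : ℕ} (hK : 2 ≤ K)
    (a w : EuclideanSpace ℝ (Fin K)) (ha : a ≠ 0)
    (l : ℝ) (hl : l ^ 2 ≤ ‖a‖ ^ 2) :
    IsGreatest ((fun x => |(inner ℝ x w : ℝ)|) ''
        {x : EuclideanSpace ℝ (Fin K) | ‖x‖ = 1 ∧ (inner ℝ a x : ℝ) = l})
      (|l * (inner ℝ a w : ℝ) / ‖a‖ ^ 2| +
        Real.sqrt (1 - l ^ 2 / ‖a‖ ^ 2) *
          ‖(Submodule.orthogonalProjectionOnto ((ℝ ∙ a)ᗮ) w : EuclideanSpace ℝ (Fin K))‖) := by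
  have hna : (0:ℝ) < ‖a‖ ^ 2 := pow_pos (norm_pos_iff.mpr ha) 2
  set S := (ℝ ∙ a)ᗮ with hS
  set p : EuclideanSpace ℝ (Fin K) := (Submodule.orthogonalProjectionOnto S w : EuclideanSpace ℝ (Fin K))
    with hp
  have hpS : p ∈ S := (Submodule.orthogonalProjectionOnto S w).2
  have key : ∀ y, y ∈ S → (inner ℝ y w : ℝ) = inner ℝ y p := by
    intro y hy
    have h1 : w - p ∈ Sᗮ := Submodule.sub_starProjection_mem_orthogonal (K := S) w
    have h2 : (inner ℝ y (w - p) : ℝ) = 0 := (Submodule.mem_orthogonal S _).mp h1 y hy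
    rw [inner_sub_right] at h2
    linarith
  set r := Real.sqrt (1 - l ^ 2 / ‖a‖ ^ 2) with hrdef
  have hsub : (0:ℝ) ≤ 1 - l ^ 2 / ‖a‖ ^ 2 := by
    have : l ^ 2 / ‖a‖ ^ 2 ≤ 1 := (div_le_one hna).mpr hl
    linarith
  have hr2 : r ^ 2 = 1 - l ^ 2 / ‖a‖ ^ 2 := Real.sq_sqrt hsub
  have hr0 : 0 ≤ r := Real.sqrt_nonneg _
  constructor
  · -- attainment
    obtain ⟨u, huS, hu1, hup⟩ : ∃ u, u ∈ S ∧ ‖u‖ = 1 ∧ (inner ℝ u p : ℝ) = ‖p‖ := by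
      by_cases hp0 : p = 0
      · have hSne : S ≠ ⊥ := by
          intro h
          have htop : (ℝ ∙ a) = ⊤ := Submodule.orthogonal_eq_bot_iff.mp h
          have h1 : Module.finrank ℝ (ℝ ∙ a) = 1 := finrank_span_singleton ha
          rw [htop, finrank_top, finrank_euclideanSpace_fin] at h1
          omega
        obtain ⟨v, hvS, hv0⟩ := Submodule.exists_mem_ne_zero_of_ne_bot hSne
        refine ⟨‖v‖⁻¹ • v, Submodule.smul_mem _ _ hvS, ?_, by simp [hp0]⟩
        simp [norm_smul, norm_ne_zero_iff.mpr hv0]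
      · refine ⟨‖p‖⁻¹ • p, Submodule.smul_mem _ _ hpS, ?_, ?_⟩
        · simp [norm_smul, norm_ne_zero_iff.mpr hp0]
        · rw [real_inner_smul_left, real_inner_self_eq_norm_sq]
          have : ‖p‖ ≠ 0 := norm_ne_zero_iff.mpr hp0
          field_simp
    set s : ℝ := if 0 ≤ l * (inner ℝ a w : ℝ) then 1 else -1 with hsdef
    have hs1 : |s| = 1 := by
      rw [hsdef]; split <;> simp
    set y : EuclideanSpace ℝ (Fin K) := (s * r) • u with hydef
    have hyS : y ∈ S := Submodule.smul_mem _ _ huS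
    have hay : (inner ℝ a y : ℝ) = 0 :=
      Submodule.mem_orthogonal_singleton_iff_inner_right.mp hyS
    have hny : ‖y‖ = r := by
      rw [hydef, norm_smul, hu1, mul_one, Real.norm_eq_abs, abs_mul, hs1, one_mul, abs_of_nonneg hr0]
    set x : EuclideanSpace ℝ (Fin K) := (l / ‖a‖ ^ 2) • a + y with hxdef
    have hax : (inner ℝ a x : ℝ) = l := by
      rw [hxdef, inner_add_right, real_inner_smul_right, hay,
        real_inner_self_eq_norm_sq]
      field_simp
      ring
    have hoxy : (inner ℝ ((l / ‖a‖ ^ 2) • a) y : ℝ) = 0 := by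
      rw [real_inner_smul_left, hay, mul_zero]
    have hnx : ‖x‖ = 1 := by
      have hsq : ‖x‖ ^ 2 = 1 := by
        rw [hxdef, norm_add_sq_real, hoxy, hny, norm_smul, mul_pow]
        have h1 : (|l / ‖a‖ ^ 2|) ^ 2 = (l / ‖a‖ ^ 2) ^ 2 := sq_abs _
        rw [Real.norm_eq_abs, h1, hr2]
        field_simp
        ring
      rw [← Real.sqrt_sq (norm_nonneg x), hsq, Real.sqrt_one]
    refine ⟨x, ⟨hnx, hax⟩, ?_⟩
    have hval : (inner ℝ x w : ℝ) = l * (inner ℝ a w : ℝ) / ‖a‖ ^ 2 + s * (r * ‖p‖) := by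
      rw [hxdef, inner_add_left, real_inner_smul_left, key y hyS, hydef,
        real_inner_smul_left, hup]
      ring
    simp only [hval]
    rcases le_or_gt 0 (l * (inner ℝ a w : ℝ)) with hpos | hneg
    · have hs : s = 1 := if_pos hpos
      have hc : 0 ≤ l * (inner ℝ a w : ℝ) / ‖a‖ ^ 2 := div_nonneg hpos hna.le
      rw [hs, one_mul, abs_of_nonneg (by positivity), abs_of_nonneg hc]
    · have hs : s = -1 := if_neg (not_le.mpr hneg)
      have hc : l * (inner ℝ a w : ℝ) / ‖a‖ ^ 2 ≤ 0 :=
        div_nonpos_of_nonpos_of_nonneg hneg.le hna.le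
      have hrp : 0 ≤ r * ‖p‖ := by positivity
      rw [hs, abs_of_nonpos (by linarith), abs_of_nonpos hc]
      ring
  · -- upper bound
    rintro t ⟨x, ⟨hx1, hx2⟩, rfl⟩
    set y : EuclideanSpace ℝ (Fin K) := x - (l / ‖a‖ ^ 2) • a with hydef
    have hay : (inner ℝ a y : ℝ) = 0 := by
      rw [hydef, inner_sub_right, real_inner_smul_right, hx2,
        real_inner_self_eq_norm_sq]
      field_simp
      ring
    have hyS : y ∈ S := Submodule.mem_orthogonal_singleton_iff_inner_right.mpr hay
    have hny2 : ‖y‖ ^ 2 = 1 - l ^ 2 / ‖a‖ ^ 2 := by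
      have hxa : (inner ℝ x ((l / ‖a‖ ^ 2) • a) : ℝ) = l / ‖a‖ ^ 2 * l := by
        rw [real_inner_smul_right, real_inner_comm, hx2]
      rw [hydef, norm_sub_sq_real, hxa, hx1, norm_smul, mul_pow, Real.norm_eq_abs,
        sq_abs]
      field_simp
      ring
    have hny : ‖y‖ = r := by
      rw [hrdef, ← hny2, Real.sqrt_sq (norm_nonneg y)]
    have hval : (inner ℝ x w : ℝ) = l * (inner ℝ a w : ℝ) / ‖a‖ ^ 2 + (inner ℝ y p : ℝ) := by
      have hx : x = y + (l / ‖a‖ ^ 2) • a := by rw [hydef]; abel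
      rw [hx, inner_add_left, real_inner_smul_left, key y hyS]
      ring
    simp only [hval]
    calc |l * (inner ℝ a w : ℝ) / ‖a‖ ^ 2 + (inner ℝ y p : ℝ)|
        ≤ |l * (inner ℝ a w : ℝ) / ‖a‖ ^ 2| + |(inner ℝ y p : ℝ)| := abs_add_le _ _
      _ ≤ |l * (inner ℝ a w : ℝ) / ‖a‖ ^ 2| + r * ‖p‖ := by
          have h := abs_real_inner_le_norm y p
          rw [hny] at h
          linarith
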